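/- For every natural number l and every positive integer n, R_{A_l}(n) = R_{B_l}(n). -/

import Mathlib

/-- digit sum recursion -/
lemma sdig_rec {n : ℕ} (hn : 0 < n) :
    (Nat.digits 2 n).sum = n % 2 + (Nat.digits 2 (n / 2)).sum := by
  rw [Nat.digits_def' (by norm_num : 1 < 2) hn]; simp

lemma sdig_two_pow (k : ℕ) : (Nat.digits 2 (2 ^ k)).sum = 1 := by
  induction k with
  | zero => simp
  | succ k ih =>
    rw [sdig_rec (by positivity : 0 < 2 ^ (k + 1))]
    have h1 : 2 ^ (k + 1) % 2 = 0 := by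
      simp [pow_succ, Nat.mul_mod_left]
    have h2 : 2 ^ (k + 1) / 2 = 2 ^ k := by
      rw [pow_succ, Nat.mul_div_cancel _ (by norm_num)]
    rw [h1, h2, ih]

lemma sdig_xor : ∀ x y : ℕ,
    (Nat.digits 2 (x ^^^ y)).sum % 2
      = ((Nat.digits 2 x).sum + (Nat.digits 2 y).sum) % 2 := by
  intro x
  induction x using Nat.strong_induction_on with
  | _ x ih =>
    intro y
    rcases Nat.eq_zero_or_pos x with hx | hx
    · subst hx; simp
    rcases Nat.eq_zero_or_pos y with hy | hy
    · subst hy; simp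
    by_cases hxy : x = y
    · subst hxy
      rw [Nat.xor_self]
      simp only [Nat.digits_zero, List.sum_nil, Nat.zero_mod]
      omega
    have hd : 0 < x ^^^ y := Nat.pos_of_ne_zero (xor_eq_zero_iff.not.mpr hxy)
    have h1 : (x ^^^ y) % 2 = (x + y) % 2 := Nat.xor_mod_two_eq
    have h2 := ih (x / 2) (Nat.div_lt_self hx (by norm_num)) (y / 2)
    rw [sdig_rec hd, sdig_rec hx, sdig_rec hy, Nat.xor_div_two] at *
    omega

lemma xor_two_pow_of_false : ∀ (k x : ℕ), x.testBit k = false → x ^^^ 2 ^ k = x + 2 ^ k := by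
  intro k
  induction k with
  | zero =>
    intro x h
    have hx : x % 2 = 0 := by
      simpa [Nat.testBit_zero] using h
    have h1 : (x ^^^ 2 ^ 0) % 2 = (x + 2 ^ 0) % 2 := Nat.xor_mod_two_eq
    have h2 : (x ^^^ 2 ^ 0) / 2 = x / 2 := by
      rw [Nat.xor_div_two]; norm_num
    have := Nat.div_add_mod (x ^^^ 2 ^ 0) 2
    simp only [pow_zero] at *
    omega
  | succ k ihk =>
    intro x h
    have h' : (x / 2).testBit k = false := by
      rw [← Nat.testBit_add_one]; exact h
    have h2 : (x ^^^ 2 ^ (k + 1)) / 2 = x / 2 + 2 ^ k := by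
      rw [Nat.xor_div_two]
      have : 2 ^ (k + 1) / 2 = 2 ^ k := by
        rw [pow_succ, Nat.mul_div_cancel _ (by norm_num)]
      rw [this, ihk _ h']
    have h1 : (x ^^^ 2 ^ (k + 1)) % 2 = x % 2 := by
      rw [Nat.xor_mod_two_eq]
      have : 2 ^ (k + 1) % 2 = 0 := by simp [pow_succ, Nat.mul_mod_left]
      omega
    have hp : 2 ^ (k + 1) = 2 * 2 ^ k := by ring
    have := Nat.div_add_mod (x ^^^ 2 ^ (k + 1)) 2
    have := Nat.div_add_mod x 2
    omega

lemma xor_two_pow_of_true {k x : ℕ} (h : x.testBit k = true) :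
    (x ^^^ 2 ^ k) + 2 ^ k = x := by
  have h1 : (x ^^^ 2 ^ k).testBit k = false := by
    simp [Nat.testBit_xor, h, Nat.testBit_two_pow_self]
  have h2 := xor_two_pow_of_false k (x ^^^ 2 ^ k) h1
  rw [xor_cancel_right] at h2
  omega

lemma exists_bit {d : ℕ} (hd : d ≠ 0) : ∃ i, d.testBit i = true :=
  ⟨_, (Nat.exists_most_significant_bit hd).choose_spec.1⟩

/-- position of lowest set bit -/
def lowBit (d : ℕ) : ℕ :=
  if h : d = 0 then 0 else Nat.find (exists_bit h)

lemma lowBit_spec {d : ℕ} (hd : d ≠ 0) : d.testBit (lowBit d) = true := by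
  rw [lowBit, dif_neg hd]
  exact Nat.find_spec (exists_bit hd)

lemma lowBit_min {d j : ℕ} (hd : d ≠ 0) (hj : j < lowBit d) : d.testBit j = false := by
  rw [lowBit, dif_neg hd] at hj
  exact Bool.eq_false_iff.mpr (Nat.find_min (exists_bit hd) hj)

lemma xor_pair (x y c : ℕ) : (x ^^^ c) ^^^ (y ^^^ c) = x ^^^ y := by
  rw [Nat.xor_assoc, Nat.xor_comm c (y ^^^ c), xor_cancel_right]

/-- the bit-flipping map -/
def F (p : ℕ × ℕ) : ℕ × ℕ :=
  (p.1 ^^^ 2 ^ lowBit (p.1 ^^^ p.2), p.2 ^^^ 2 ^ lowBit (p.1 ^^^ p.2))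

lemma F_invol (p : ℕ × ℕ) (h : p.1 ≠ p.2) : F (F p) = p := by
  obtain ⟨x, y⟩ := p
  simp only [F, xor_pair, xor_cancel_right]

lemma key (l x y : ℕ) (hxy : x < y) (hxl : x ≤ 2 ^ l - 1) (hyl : y ≤ 2 ^ l - 1)
    (hpar : Even ((Nat.digits 2 x).sum) ↔ Even ((Nat.digits 2 y).sum)) :
    (x ^^^ 2 ^ lowBit (x ^^^ y)) < (y ^^^ 2 ^ lowBit (x ^^^ y)) ∧
    (x ^^^ 2 ^ lowBit (x ^^^ y)) + (y ^^^ 2 ^ lowBit (x ^^^ y)) = x + y ∧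
    (x ^^^ 2 ^ lowBit (x ^^^ y)) ≤ 2 ^ l - 1 ∧
    (y ^^^ 2 ^ lowBit (x ^^^ y)) ≤ 2 ^ l - 1 ∧
    (Even ((Nat.digits 2 (x ^^^ 2 ^ lowBit (x ^^^ y))).sum) ↔
      ¬ Even ((Nat.digits 2 x).sum)) ∧
    (Even ((Nat.digits 2 (y ^^^ 2 ^ lowBit (x ^^^ y))).sum) ↔
      ¬ Even ((Nat.digits 2 y).sum)) := by
  have hd : x ^^^ y ≠ 0 := xor_eq_zero_iff.not.mpr (Nat.ne_of_lt hxy)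
  set d := x ^^^ y with hddef
  set k := lowBit d with hkdef
  have hk : d.testBit k = true := lowBit_spec hd
  obtain ⟨i, hi, hiu⟩ := Nat.exists_most_significant_bit hd
  have hki : k ≤ i := by
    by_contra hc
    rw [hiu k (by omega)] at hk; exact Bool.false_ne_true hk
  -- parity of the digit sum of d is even
  have hsd : (Nat.digits 2 d).sum % 2 = 0 := by
    have h : (Nat.digits 2 d).sum % 2 = ((Nat.digits 2 x).sum + (Nat.digits 2 y).sum) % 2 := sdig_xor x y
    rw [Nat.even_iff, Nat.even_iff] at hpar
    have hx2 := Nat.mod_two_eq_zero_or_one ((Nat.digits 2 x).sum)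
    have hy2 := Nat.mod_two_eq_zero_or_one ((Nat.digits 2 y).sum)
    omega
  have hne : d ≠ 2 ^ k := by
    intro h
    rw [h, sdig_two_pow] at hsd; omega
  have hki' : k < i := by
    rcases lt_or_eq_of_le hki with h | h
    · exact h
    exfalso
    apply hne
    apply Nat.eq_of_testBit_eq
    intro j
    rcases lt_trichotomy j k with hj | hj | hj
    · rw [lowBit_min hd hj, Nat.testBit_two_pow_of_ne (by omega)]
    · subst hj; rw [hk, Nat.testBit_two_pow_self]
    · rw [hiu j (by omega), Nat.testBit_two_pow_of_ne (by omega)]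
  have high_eq : ∀ j, i < j → x.testBit j = y.testBit j := by
    intro j hj
    have := hiu j hj
    rw [hddef, Nat.testBit_xor] at this
    simpa using this
  have hxyi : x.testBit i = false ∧ y.testBit i = true := by
    have hne' : x.testBit i ≠ y.testBit i := by
      have := hi
      rw [hddef, Nat.testBit_xor] at this
      simpa using this
    cases hx : x.testBit i <;> cases hy : y.testBit i
    · exact absurd (hx.trans hy.symm) hne'
    · exact ⟨rfl, rfl⟩
    · exfalso
      have : y < x := Nat.lt_of_testBit i hy hx
        (fun j hj => (high_eq j hj).symm)
      omega
    · exact absurd (hx.trans hy.symm) hne'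
  -- i < l
  have h2l : 0 < 2 ^ l := Nat.pow_pos (by norm_num)
  have hil : i < l := by
    by_contra hc
    have hyi : y < 2 ^ i := by
      calc y ≤ 2 ^ l - 1 := hyl
        _ < 2 ^ l := by omega
        _ ≤ 2 ^ i := Nat.pow_le_pow_right (by norm_num) (by omega)
    rw [Nat.testBit_lt_two_pow hyi] at hxyi
    exact Bool.false_ne_true hxyi.2
  -- unchanged high bits
  have bit_unch : ∀ z j, k < j → (z ^^^ 2 ^ k).testBit j = z.testBit j := by
    intro z j hj
    rw [Nat.testBit_xor, Nat.testBit_two_pow_of_ne (by omega)]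
    simp
  -- order
  have horder : (x ^^^ 2 ^ k) < (y ^^^ 2 ^ k) := by
    apply Nat.lt_of_testBit i
    · rw [bit_unch x i hki']; exact hxyi.1
    · rw [bit_unch y i hki']; exact hxyi.2
    · intro j hj
      rw [bit_unch x j (by omega), bit_unch y j (by omega)]
      exact high_eq j hj
  -- sum
  have hbitk : x.testBit k ≠ y.testBit k := by
    have := hk
    rw [hddef, Nat.testBit_xor] at this
    simpa using this
  have hsum : (x ^^^ 2 ^ k) + (y ^^^ 2 ^ k) = x + y := by
    cases hxk : x.testBit k
    · have hyk : y.testBit k = true := by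
        cases hyk : y.testBit k
        · exact absurd (hxk.trans hyk.symm) hbitk
        · rfl
      have e1 := xor_two_pow_of_false k x hxk
      have e2 := xor_two_pow_of_true hyk
      omega
    · have hyk : y.testBit k = false := by
        cases hyk : y.testBit k
        · rfl
        · exact absurd (hxk.trans hyk.symm) hbitk
      have e1 := xor_two_pow_of_true hxk
      have e2 := xor_two_pow_of_false k y hyk
      omega
  -- bounds
  have hklt : (2 : ℕ) ^ k < 2 ^ l := Nat.pow_lt_pow_right (by norm_num) (by omega)
  have hbx : (x ^^^ 2 ^ k) ≤ 2 ^ l - 1 := by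
    have := Nat.xor_lt_two_pow (n := l) (by omega : x < 2 ^ l) hklt
    omega
  have hby : (y ^^^ 2 ^ k) ≤ 2 ^ l - 1 := by
    have := Nat.xor_lt_two_pow (n := l) (by omega : y < 2 ^ l) hklt
    omega
  -- parity flips
  have flip : ∀ z : ℕ, (Even ((Nat.digits 2 (z ^^^ 2 ^ k)).sum) ↔
      ¬ Even ((Nat.digits 2 z).sum)) := by
    intro z
    have := sdig_xor z (2 ^ k)
    rw [sdig_two_pow] at this
    rw [Nat.even_iff, Nat.even_iff]
    omega
  exact ⟨horder, hsum, hbx, hby, flip x, flip y⟩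

/-- `R S n` is the number of unordered representations of `n` as `s + s'`
with `s, s' ∈ S` and `s < s'`. -/
noncomputable def R (S : Set ℕ) (n : ℕ) : ℕ :=
  {p : ℕ × ℕ | p.1 ∈ S ∧ p.2 ∈ S ∧ p.1 < p.2 ∧ p.1 + p.2 = n}.ncard

/-- The Thue–Morse set: nonnegative integers with an even number of
`1` digits in binary. -/
def A : Set ℕ := {n | Even ((Nat.digits 2 n).sum)}

/-- The complement of the Thue–Morse set. -/
def B : Set ℕ := Aᶜ

/-- `Af l = A ∩ [0, 2^l − 1]`. -/
def Af (l : ℕ) : Set ℕ := A ∩ Set.Iic (2 ^ l - 1)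

/-- `Bf l = B ∩ [0, 2^l − 1]`. -/
def Bf (l : ℕ) : Set ℕ := B ∩ Set.Iic (2 ^ l - 1)

theorem repr_Af_eq_Bf (l n : ℕ) (hn : 0 < n) : R (Af l) n = R (Bf l) n := by
  classical
  set SA : Set (ℕ × ℕ) := {p : ℕ × ℕ | p.1 ∈ Af l ∧ p.2 ∈ Af l ∧ p.1 < p.2 ∧ p.1 + p.2 = n}
    with hSA
  set SB : Set (ℕ × ℕ) := {p : ℕ × ℕ | p.1 ∈ Bf l ∧ p.2 ∈ Bf l ∧ p.1 < p.2 ∧ p.1 + p.2 = n}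
    with hSB
  have hmemA : ∀ z : ℕ, z ∈ Af l ↔ Even ((Nat.digits 2 z).sum) ∧ z ≤ 2 ^ l - 1 := by
    intro z; simp [Af, A, Set.mem_Iic]
  have hmemB : ∀ z : ℕ, z ∈ Bf l ↔ ¬ Even ((Nat.digits 2 z).sum) ∧ z ≤ 2 ^ l - 1 := by
    intro z; simp [Bf, B, A, Set.mem_Iic]
  have himg : F '' SA = SB := by
    apply Set.Subset.antisymm
    · rintro q ⟨⟨x, y⟩, hp, rfl⟩
      obtain ⟨h1, h2, hlt, hsum⟩ := hp
      rw [hmemA] at h1 h2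
      obtain ⟨ho, hs, hb1, hb2, hf1, hf2⟩ :=
        key l x y hlt h1.2 h2.2 (by tauto)
      have hsum' : x + y = n := hsum
      simp only [hSB, Set.mem_setOf_eq, F]
      exact ⟨(hmemB _).mpr ⟨fun h => (hf1.mp h) h1.1, hb1⟩,
        (hmemB _).mpr ⟨fun h => (hf2.mp h) h2.1, hb2⟩, ho, hs.trans hsum'⟩
    · rintro ⟨x, y⟩ hp
      obtain ⟨h1, h2, hlt, hsum⟩ := hp
      rw [hmemB] at h1 h2
      obtain ⟨ho, hs, hb1, hb2, hf1, hf2⟩ :=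
        key l x y hlt h1.2 h2.2 (by tauto)
      have hsum' : x + y = n := hsum
      refine ⟨F (x, y), ?_, F_invol (x, y) (Nat.ne_of_lt hlt)⟩
      simp only [hSA, Set.mem_setOf_eq, F]
      exact ⟨(hmemA _).mpr ⟨hf1.mpr h1.1, hb1⟩,
        (hmemA _).mpr ⟨hf2.mpr h2.1, hb2⟩, ho, hs.trans hsum'⟩
  have hinj : Set.InjOn F SA := by
    intro p hp q hq hpq
    have hp' : p.1 ≠ p.2 := Nat.ne_of_lt hp.2.2.1
    have hq' : q.1 ≠ q.2 := Nat.ne_of_lt hq.2.2.1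
    calc p = F (F p) := (F_invol p hp').symm
      _ = F (F q) := by rw [hpq]
      _ = q := F_invol q hq'
  show SA.ncard = SB.ncard
  rw [← himg, Set.ncard_image_of_injOn hinj]
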